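/- Let R be a commutative ring, M and N modules over R with N Noetherian, and h ∈ Hom_R(N, M). Then h is injective if and only if for every associated prime p of N, the localization h_p restricted to the socle Soc_{R_p}(N_p) (the set of elements of N_p annihilated by p R_p) is injective. -/

import Mathlib

open Submodule

private lemma aux_noeth_quot {R N : Type*} [CommRing R] [AddCommGroup N] [Module R N]
    [IsNoetherian R N] : IsNoetherianRing (R ⧸ Module.annihilator R N) := by
  obtain ⟨s, hs⟩ := IsNoetherian.noetherian (⊤ : Submodule R N)
  let g : R →ₗ[R] (s → N) := LinearMap.pi fun i => LinearMap.toSpanSingleton R N i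
  have hJ : (Module.annihilator R N : Submodule R R) ≤ LinearMap.ker g := by
    intro r hr
    rw [LinearMap.mem_ker]
    funext i
    exact Module.mem_annihilator.mp hr _
  have hJ' : LinearMap.ker g ≤ (Module.annihilator R N : Submodule R R) := by
    intro r hr
    rw [LinearMap.mem_ker] at hr
    rw [Module.mem_annihilator]
    intro m
    have hm : m ∈ (⊤ : Submodule R N) := trivial
    rw [← hs] at hm
    induction hm using Submodule.span_induction with
    | mem y hy =>
        have := congrFun hr ⟨y, hy⟩
        simpa [g, LinearMap.toSpanSingleton, LinearMap.smulRight] using this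
    | zero => simp
    | add y z _ _ hy hz => rw [smul_add, hy, hz, add_zero]
    | smul c y _ hy => rw [smul_comm, hy, smul_zero]
  let f : (R ⧸ Module.annihilator R N) →ₗ[R] (s → N) :=
    (Module.annihilator R N).liftQ g hJ
  have hf : Function.Injective f := by
    rw [← LinearMap.ker_eq_bot, Submodule.ker_liftQ_eq_bot]
    exact hJ'
  have : IsNoetherian R (R ⧸ Module.annihilator R N) := isNoetherian_of_injective f hf
  exact isNoetherian_of_tower R this

private lemma aux_radical_of_ann {R N : Type*} [CommRing R] [AddCommGroup N] [Module R N]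
    (P : Ideal R) (hP : P.IsPrime) (y : N) (hy : P = (R ∙ y).annihilator) :
    P = ((⊥ : Submodule R N).colon {y}).radical := by
  ext r
  constructor
  · intro hr
    rw [hy, Submodule.mem_annihilator_span_singleton] at hr
    exact ⟨1, by simpa [Submodule.mem_colon_singleton] using hr⟩
  · rintro ⟨n, hn⟩
    apply hP.mem_of_pow_mem n
    rw [hy, Submodule.mem_annihilator_span_singleton]
    simpa [Submodule.mem_colon_singleton] using hn

private lemma aux_exists_assoc {R N : Type*} [CommRing R] [AddCommGroup N] [Module R N]
    [IsNoetherian R N] (x : N) (hx : x ≠ 0) :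
    ∃ P : Ideal R, (P.IsPrime ∧ ∃ y : N, P = (R ∙ y).annihilator) ∧ (R ∙ x).annihilator ≤ P := by
  set J := Module.annihilator R N with hJdef
  let π := Ideal.Quotient.mk J
  have hπ : Function.Surjective π := Ideal.Quotient.mk_surjective
  have hJle : ∀ y : N, J ≤ (R ∙ y).annihilator := by
    intro y r hr
    rw [Submodule.mem_annihilator_span_singleton]
    exact Module.mem_annihilator.mp hr y
  have comap_map : ∀ I : Ideal R, J ≤ I → (I.map π).comap π = I := by
    intro I hI
    rw [Ideal.comap_map_of_surjective π hπ]
    have : Ideal.comap π ⊥ = J := by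
      rw [← RingHom.ker_eq_comap_bot, Ideal.mk_ker]
    rw [this, sup_eq_left.mpr hI]
  have map_comap : ∀ P : Ideal (R ⧸ J), (P.comap π).map π = P := fun P =>
    Ideal.map_comap_of_surjective π hπ P
  have hxne : (R ∙ x).annihilator ≠ ⊤ := by
    rw [Ne, Ideal.eq_top_iff_one, Submodule.mem_annihilator_span_singleton, one_smul]
    exact hx
  haveI := aux_noeth_quot (R := R) (N := N)
  obtain ⟨P, ⟨h₁, h₂, y, hy⟩, h₃⟩ :=
    set_has_maximal_iff_noetherian.mpr (by rwa [← isNoetherianRing_iff])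
      { P : Ideal (R ⧸ J) | (R ∙ x).annihilator ≤ P.comap π ∧ P.comap π ≠ ⊤ ∧
          ∃ y : N, P.comap π = (R ∙ y).annihilator }
      ⟨((R ∙ x).annihilator).map π, by
        have hc := comap_map _ (hJle x)
        exact ⟨hc.ge, by rw [hc]; exact hxne, x, hc⟩⟩
  refine ⟨Ideal.comap π P, ⟨⟨h₂, ?_⟩, y, hy⟩, h₁⟩
  intro a b hab
  rw [or_iff_not_imp_left]
  intro ha
  rw [hy, Submodule.mem_annihilator_span_singleton] at ha hab ⊢
  have hy0 : a • y ≠ 0 := ha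
  have H₁ : (R ∙ y).annihilator ≤ (R ∙ a • y).annihilator := by
    intro c hc
    rw [Submodule.mem_annihilator_span_singleton] at hc ⊢
    rw [smul_comm, hc, smul_zero]
  have H₂ : (R ∙ a • y).annihilator ≠ ⊤ := by
    rw [Ne, Ideal.eq_top_iff_one, Submodule.mem_annihilator_span_singleton, one_smul]
    exact hy0
  have hQmem : ((R ∙ a • y).annihilator).map π ∈
      { P : Ideal (R ⧸ J) | (R ∙ x).annihilator ≤ P.comap π ∧ P.comap π ≠ ⊤ ∧
          ∃ y : N, P.comap π = (R ∙ y).annihilator } := by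
    rw [Set.mem_setOf_eq, comap_map _ (hJle (a • y))]
    exact ⟨h₁.trans (hy ▸ H₁), H₂, a • y, rfl⟩
  have hle : P ≤ ((R ∙ a • y).annihilator).map π := by
    conv_lhs => rw [← map_comap P]
    exact Ideal.map_mono (hy ▸ H₁)
  have hEq : ((R ∙ a • y).annihilator).map π = P :=
    le_antisymm (by by_contra hne; exact h₃ _ hQmem (lt_of_le_of_ne hle (by
      intro hcontra; exact hne (hcontra ▸ le_rfl)))) hle
  have : Ideal.comap π P = (R ∙ a • y).annihilator := by
    rw [← hEq, comap_map _ (hJle (a • y))]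
  rw [hy] at this
  have hb : b ∈ (R ∙ a • y).annihilator := by
    rw [Submodule.mem_annihilator_span_singleton, smul_comm, smul_smul]
    exact hab
  rw [← this] at hb
  rwa [Submodule.mem_annihilator_span_singleton] at hb

theorem stmt_4 {R M N : Type*} [CommRing R]
    [AddCommGroup M] [Module R M] [AddCommGroup N] [Module R N]
    [IsNoetherian R N] (h : N →ₗ[R] M) :
    Function.Injective h ↔
      ∀ (p : Ideal R) [p.IsPrime], p ∈ associatedPrimes R N →
        ∀ x : LocalizedModule p.primeCompl N,
          (∀ a ∈ p, a • x = 0) →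
          IsLocalizedModule.map p.primeCompl
            (LocalizedModule.mkLinearMap p.primeCompl N)
            (LocalizedModule.mkLinearMap p.primeCompl M) h x = 0 →
          x = 0 := by
  constructor
  · intro hinj p _ hp x _ hmap
    have := IsLocalizedModule.map_injective (S := p.primeCompl)
      (f := LocalizedModule.mkLinearMap p.primeCompl N)
      (g := LocalizedModule.mkLinearMap p.primeCompl M) h hinj
    apply this
    simpa using hmap
  · intro H
    rw [← LinearMap.ker_eq_bot]
    by_contra hker
    obtain ⟨z, hzmem, hz⟩ := Submodule.exists_mem_ne_zero_of_ne_bot hker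
    haveI : IsNoetherian R (LinearMap.ker h) :=
      isNoetherian_of_submodule_of_noetherian R N _ inferInstance
    obtain ⟨P, ⟨hPprime, w, hw⟩, _⟩ :=
      aux_exists_assoc (R := R) (N := LinearMap.ker h) ⟨z, hzmem⟩ (by simpa using hz)
    -- P = annihilator of w.1 in N
    have hwN : P = (R ∙ (w : N)).annihilator := by
      rw [hw]
      ext r
      rw [Submodule.mem_annihilator_span_singleton, Submodule.mem_annihilator_span_singleton]
      constructor
      · intro hr; exact congrArg Subtype.val hr
      · intro hr; exact Subtype.ext hr
    have hPassoc : P ∈ associatedPrimes R N := ⟨hPprime, (w : N), aux_radical_of_ann P hPprime (w : N) hwN⟩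
    have hw0 : h (w : N) = 0 := w.2
    have hsoc : ∀ a ∈ P, a • (LocalizedModule.mk (w : N) 1 :
        LocalizedModule P.primeCompl N) = 0 := by
      intro a ha
      have : a • (w : N) = 0 := by
        rw [hwN, Submodule.mem_annihilator_span_singleton] at ha
        exact ha
      rw [LocalizedModule.smul'_mk, this, LocalizedModule.zero_mk]
    have hmk : (LocalizedModule.mk (w : N) 1 : LocalizedModule P.primeCompl N) =
        LocalizedModule.mkLinearMap P.primeCompl N (w : N) := rfl
    have hmap0 : IsLocalizedModule.map P.primeCompl
        (LocalizedModule.mkLinearMap P.primeCompl N)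
        (LocalizedModule.mkLinearMap P.primeCompl M) h
        (LocalizedModule.mk (w : N) 1) = 0 := by
      rw [hmk, IsLocalizedModule.map_apply, hw0, map_zero]
    haveI := hPprime
    have := H P hPassoc (LocalizedModule.mk (w : N) 1) hsoc hmap0
    rw [show (0 : LocalizedModule P.primeCompl N) = LocalizedModule.mk 0 1 from
      (LocalizedModule.zero_mk 1).symm, LocalizedModule.mk_eq] at this
    obtain ⟨u, hu⟩ := this
    simp only [one_smul, smul_zero] at hu
    have hu' : (u : R) • (w : N) = 0 := by
      simpa [Submonoid.smul_def] using hu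
    have hmem : (u : R) ∈ (R ∙ (w : N)).annihilator :=
      (Submodule.mem_annihilator_span_singleton _ _).mpr hu'
    exact u.2 (hwN.symm ▸ hmem)
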